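/- Under the structured RIP hypothesis (with blocks as above), for any two disjoint block-index sets Ω₁, Ω₂ with |Ω₁|+|Ω₂| ≤ P, RIP constants δ_{|Ω₁|}, δ_{|Ω₂|}, δ_{|Ω₁|+|Ω₂|} all < 1, and any matrix D supported on Ω₂: (1 − δ_{|Ω₁|+|Ω₂|}/√((1−δ_{|Ω₁|})(1−δ_{|Ω₂|}))) · ‖Ψ_{Ω₂}D_{Ω₂}‖_F ≤ ‖(I − Ψ_{Ω₁}Ψ_{Ω₁}^†) Ψ_{Ω₂}D_{Ω₂}‖_F ≤ ‖Ψ_{Ω₂}D_{Ω₂}‖_F, where Ψ_{Ω₁}^† = (Ψ_{Ω₁}ᴴΨ_{Ω₁})^{-1}Ψ_{Ω₁}ᴴ is the Moore–Penrose pseudoinverse (Ψ_{Ω₁} having full column rank). -/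

import Mathlib

open scoped BigOperators
open Matrix
noncomputable section

variable {Np M L R : ℕ}

/-- Frobenius norm of a complex matrix. -/
def frob {m n : Type*} [Fintype m] [Fintype n] (A : Matrix m n ℂ) : ℝ :=
  Real.sqrt (∑ i, ∑ j, ‖A i j‖ ^ 2)

/-- `D` is block-supported on the block-index set `Ω`. -/
def SuppOn (Ω : Finset (Fin L)) (D : Matrix (Fin L × Fin M) (Fin R) ℂ) : Prop :=
  ∀ p r, p.1 ∉ Ω → D p r = 0

/-- Column-block submatrix `Ψ_Ω` of `Ψ`. -/
def bsub (Ψ : Matrix (Fin Np) (Fin L × Fin M) ℂ) (Ω : Finset (Fin L)) :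
    Matrix (Fin Np) ({l // l ∈ Ω} × Fin M) ℂ :=
  Ψ.submatrix id (fun q => ((q.1 : Fin L), q.2))

/-- Row-block submatrix `D_Ω` of `D`. -/
def rsub (D : Matrix (Fin L × Fin M) (Fin R) ℂ) (Ω : Finset (Fin L)) :
    Matrix ({l // l ∈ Ω} × Fin M) (Fin R) ℂ :=
  D.submatrix (fun q => ((q.1 : Fin L), q.2)) id

/-- Moore–Penrose pseudoinverse `Ψ_Ω^† = (Ψ_Ωᴴ Ψ_Ω)⁻¹ Ψ_Ωᴴ` of the column-block submatrix. -/
def bpinv (Ψ : Matrix (Fin Np) (Fin L × Fin M) ℂ) (Ω : Finset (Fin L)) :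
    Matrix ({l // l ∈ Ω} × Fin M) (Fin Np) ℂ :=
  ((bsub Ψ Ω)ᴴ * bsub Ψ Ω)⁻¹ * (bsub Ψ Ω)ᴴ

/-- Re-embed a matrix indexed by the blocks of `Ω` as a full `ML × R` matrix, zero outside `Ω`. -/
def expand (Ω : Finset (Fin L)) (X : Matrix ({l // l ∈ Ω} × Fin M) (Fin R) ℂ) :
    Matrix (Fin L × Fin M) (Fin R) ℂ :=
  fun p r => if h : p.1 ∈ Ω then X (⟨p.1, h⟩, p.2) r else 0

/-- Structured (block) RIP of order `P` with constant `δ`. -/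
def SRIP (Ψ : Matrix (Fin Np) (Fin L × Fin M) ℂ) (P : ℕ) (δ : ℝ) : Prop :=
  ∀ Ω : Finset (Fin L), Ω.card ≤ P →
    ∀ D : Matrix (Fin L × Fin M) (Fin R) ℂ, SuppOn Ω D →
      (1 - δ) * frob D ^ 2 ≤ frob (Ψ * D) ^ 2 ∧ frob (Ψ * D) ^ 2 ≤ (1 + δ) * frob D ^ 2

/-! ### Auxiliary material for the proof -/

section Aux

def f2 {m n : Type*} [Fintype m] [Fintype n] (A : Matrix m n ℂ) : ℝ :=
  ∑ i, ∑ j, ‖A i j‖ ^ 2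

def ipc {m n : Type*} [Fintype m] [Fintype n] (A B : Matrix m n ℂ) : ℂ :=
  ∑ i, ∑ j, star (A i j) * B i j

variable {m n k : Type*} [Fintype m] [Fintype n] [Fintype k]

lemma f2_nonneg (A : Matrix m n ℂ) : 0 ≤ f2 A := by
  apply Finset.sum_nonneg; intro i _; apply Finset.sum_nonneg; intro j _; positivity

lemma star_mul_self_re (z : ℂ) : (star z * z).re = ‖z‖ ^ 2 := by
  rw [Complex.star_def, ← Complex.normSq_eq_conj_mul_self, Complex.ofReal_re,
    ← Complex.sq_norm]

lemma ipc_self_re (A : Matrix m n ℂ) : (ipc A A).re = f2 A := by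
  simp only [ipc, f2, Complex.re_sum]
  exact Finset.sum_congr rfl fun i _ => Finset.sum_congr rfl fun j _ => star_mul_self_re _

lemma ipc_conj (A B : Matrix m n ℂ) : ipc A B = star (ipc B A) := by
  simp only [ipc, star_sum, star_mul', star_star]
  exact Finset.sum_congr rfl fun i _ => Finset.sum_congr rfl fun j _ => mul_comm _ _

lemma ipc_re_comm (A B : Matrix m n ℂ) : (ipc A B).re = (ipc B A).re := by
  rw [ipc_conj]; simp

lemma ipc_eq_trace (A B : Matrix m n ℂ) : ipc A B = (Aᴴ * B).trace := by
  simp only [ipc, Matrix.trace, Matrix.diag, Matrix.mul_apply, conjTranspose_apply]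
  exact Finset.sum_comm

lemma ipc_mul_left (Mm : Matrix k m ℂ) (A : Matrix m n ℂ) (C : Matrix k n ℂ) :
    ipc (Mm * A) C = ipc A (Mmᴴ * C) := by
  rw [ipc_eq_trace, ipc_eq_trace, conjTranspose_mul, Matrix.mul_assoc]

lemma ipc_add_right (A : Matrix m n ℂ) (B C : Matrix m n ℂ) :
    ipc A (B + C) = ipc A B + ipc A C := by
  simp only [ipc, Matrix.add_apply, mul_add, Finset.sum_add_distrib]

lemma ipc_add_left (A B : Matrix m n ℂ) (C : Matrix m n ℂ) :
    ipc (A + B) C = ipc A C + ipc B C := by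
  simp only [ipc, Matrix.add_apply, star_add, add_mul, Finset.sum_add_distrib]

lemma ipc_smul_left (c : ℂ) (A B : Matrix m n ℂ) : ipc (c • A) B = star c * ipc A B := by
  simp only [ipc, Matrix.smul_apply, smul_eq_mul, star_mul']
  rw [Finset.mul_sum]
  refine Finset.sum_congr rfl fun i _ => ?_
  rw [Finset.mul_sum]
  exact Finset.sum_congr rfl fun j _ => by ring

lemma ipc_smul_right (c : ℂ) (A B : Matrix m n ℂ) : ipc A (c • B) = c * ipc A B := by
  simp only [ipc, Matrix.smul_apply, smul_eq_mul]
  rw [Finset.mul_sum]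
  refine Finset.sum_congr rfl fun i _ => ?_
  rw [Finset.mul_sum]
  exact Finset.sum_congr rfl fun j _ => by ring

lemma ipc_zero_right (A : Matrix m n ℂ) : ipc A (0 : Matrix m n ℂ) = 0 := by
  simp [ipc]

lemma f2_add (A B : Matrix m n ℂ) : f2 (A + B) = f2 A + 2 * (ipc A B).re + f2 B := by
  rw [← ipc_self_re, ← ipc_self_re, ← ipc_self_re, ipc_add_left, ipc_add_right, ipc_add_right]
  have := ipc_re_comm B A
  simp only [Complex.add_re]
  linarith

lemma f2_eq_zero_iff (A : Matrix m n ℂ) : f2 A = 0 ↔ A = 0 := by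
  constructor
  · intro h
    ext i j
    have h1 : ∀ i ∈ Finset.univ, (0:ℝ) ≤ ∑ j, ‖A i j‖^2 := by
      intro i _; apply Finset.sum_nonneg; intros; positivity
    have h2 := (Finset.sum_eq_zero_iff_of_nonneg h1).mp h i (Finset.mem_univ i)
    have h3 : ∀ j ∈ Finset.univ, (0:ℝ) ≤ ‖A i j‖^2 := by intros; positivity
    have h4 := (Finset.sum_eq_zero_iff_of_nonneg h3).mp h2 j (Finset.mem_univ j)
    simpa using h4
  · intro h; simp [h, f2]

lemma ipc_cs (A B : Matrix m n ℂ) : (ipc A B).re ≤ Real.sqrt (f2 A) * Real.sqrt (f2 B) := by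
  have h1 : (ipc A B).re ≤ ∑ i, ∑ j, ‖A i j‖ * ‖B i j‖ := by
    simp only [ipc, Complex.re_sum]
    refine Finset.sum_le_sum fun i _ => Finset.sum_le_sum fun j _ => ?_
    calc (star (A i j) * B i j).re ≤ ‖star (A i j) * B i j‖ := Complex.re_le_norm _
    _ = ‖A i j‖ * ‖B i j‖ := by rw [norm_mul, norm_star]
  refine h1.trans ?_
  have h2 : ∑ i, ∑ j, ‖A i j‖ * ‖B i j‖ = ∑ p : m × n, ‖A p.1 p.2‖ * ‖B p.1 p.2‖ := by
    exact (Fintype.sum_prod_type' _).symm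
  have hA : f2 A = ∑ p : m × n, ‖A p.1 p.2‖ ^ 2 := by
    rw [f2]; exact (Fintype.sum_prod_type' _).symm
  have hB : f2 B = ∑ p : m × n, ‖B p.1 p.2‖ ^ 2 := by
    rw [f2]; exact (Fintype.sum_prod_type' _).symm
  have cs := Finset.sum_mul_sq_le_sq_mul_sq Finset.univ
    (fun p : m × n => ‖A p.1 p.2‖) (fun p => ‖B p.1 p.2‖)
  have hS : (0:ℝ) ≤ ∑ p : m × n, ‖A p.1 p.2‖ * ‖B p.1 p.2‖ := by
    apply Finset.sum_nonneg; intros; positivity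
  rw [h2, hA, hB]
  calc ∑ p : m × n, ‖A p.1 p.2‖ * ‖B p.1 p.2‖
      = Real.sqrt ((∑ p : m × n, ‖A p.1 p.2‖ * ‖B p.1 p.2‖)^2) := (Real.sqrt_sq hS).symm
    _ ≤ Real.sqrt ((∑ p : m × n, ‖A p.1 p.2‖^2) * (∑ p : m × n, ‖B p.1 p.2‖^2)) :=
        Real.sqrt_le_sqrt cs
    _ = _ := Real.sqrt_mul (by apply Finset.sum_nonneg; intros; positivity) _

lemma f2_smul_real (r : ℝ) (A : Matrix m n ℂ) : f2 ((r:ℂ) • A) = r^2 * f2 A := by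
  rw [← ipc_self_re, ipc_smul_left, ipc_smul_right, ← mul_assoc]
  have h : (star (r:ℂ)) * (r:ℂ) = ((r^2 : ℝ) : ℂ) := by
    rw [Complex.star_def, Complex.conj_ofReal]; push_cast; ring
  rw [h, Complex.re_ofReal_mul, ipc_self_re]

lemma ipc_re_smul_real (r s : ℝ) (A B : Matrix m n ℂ) :
    (ipc ((r:ℂ) • A) ((s:ℂ) • B)).re = r * s * (ipc A B).re := by
  rw [ipc_smul_left, ipc_smul_right, ← mul_assoc]
  have h : star (r:ℂ) * (s:ℂ) = ((r * s : ℝ) : ℂ) := by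
    rw [Complex.star_def, Complex.conj_ofReal]; push_cast; ring
  rw [h, Complex.re_ofReal_mul]

lemma frob_eq_sqrt_f2 (A : Matrix m n ℂ) : frob A = Real.sqrt (f2 A) := rfl

lemma frob_sq (A : Matrix m n ℂ) : frob A ^ 2 = f2 A := Real.sq_sqrt (f2_nonneg A)

end Aux

section Aux2

variable {Np M L R : ℕ}

lemma sum_supp {β : Type*} [AddCommMonoid β] (Ω : Finset (Fin L))
    (g : Fin L × Fin M → β) (hg : ∀ p, p.1 ∉ Ω → g p = 0) :
    ∑ p, g p = ∑ q : {l // l ∈ Ω} × Fin M, g (↑q.1, q.2) := by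
  rw [Fintype.sum_prod_type, Fintype.sum_prod_type]
  have h1 : ∑ l : Fin L, ∑ m, g (l, m) = ∑ l ∈ Ω, ∑ m, g (l, m) :=
    (Finset.sum_subset (Finset.subset_univ Ω)
      (fun l _ hl => Finset.sum_eq_zero fun m _ => hg (l, m) hl)).symm
  rw [h1, ← Finset.sum_coe_sort]

lemma mul_rsub_eq (Ψ : Matrix (Fin Np) (Fin L × Fin M) ℂ) (Ω : Finset (Fin L))
    (D : Matrix (Fin L × Fin M) (Fin R) ℂ) (hD : SuppOn Ω D) :
    bsub Ψ Ω * rsub D Ω = Ψ * D := by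
  ext i r
  simp only [Matrix.mul_apply, bsub, rsub, Matrix.submatrix_apply, id_eq]
  exact (sum_supp Ω (fun p => Ψ i p * D p r)
    (fun p hp => by show Ψ i p * D p r = 0; rw [hD p r hp, mul_zero])).symm

lemma suppOn_expand (Ω : Finset (Fin L)) (X : Matrix ({l // l ∈ Ω} × Fin M) (Fin R) ℂ) :
    SuppOn Ω (expand Ω X) := fun p r hp => dif_neg hp

lemma rsub_expand (Ω : Finset (Fin L)) (X : Matrix ({l // l ∈ Ω} × Fin M) (Fin R) ℂ) :
    rsub (expand Ω X) Ω = X := by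
  ext q r
  simp only [rsub, expand, Matrix.submatrix_apply, id_eq]
  rw [dif_pos q.1.2]

lemma mul_expand (Ψ : Matrix (Fin Np) (Fin L × Fin M) ℂ) (Ω : Finset (Fin L))
    (X : Matrix ({l // l ∈ Ω} × Fin M) (Fin R) ℂ) :
    Ψ * expand Ω X = bsub Ψ Ω * X := by
  rw [← mul_rsub_eq Ψ Ω (expand Ω X) (suppOn_expand Ω X), rsub_expand]

lemma f2_rsub (Ω : Finset (Fin L)) (D : Matrix (Fin L × Fin M) (Fin R) ℂ)
    (hD : SuppOn Ω D) : f2 (rsub D Ω) = f2 D := by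
  unfold f2
  rw [sum_supp Ω (fun p => ∑ r, ‖D p r‖ ^ 2)
    (fun p hp => Finset.sum_eq_zero fun r _ => by
      show ‖D p r‖ ^ 2 = 0; rw [hD p r hp]; simp)]
  rfl

lemma f2_expand (Ω : Finset (Fin L)) (X : Matrix ({l // l ∈ Ω} × Fin M) (Fin R) ℂ) :
    f2 (expand Ω X) = f2 X := by
  rw [← f2_rsub Ω (expand Ω X) (suppOn_expand Ω X), rsub_expand]

lemma suppOn_union_left (Ω₁ Ω₂ : Finset (Fin L)) (u : Matrix (Fin L × Fin M) (Fin R) ℂ)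
    (hu : SuppOn Ω₁ u) : SuppOn (Ω₁ ∪ Ω₂) u :=
  fun p r hp => hu p r fun h => hp (Finset.mem_union_left _ h)

lemma suppOn_union_right (Ω₁ Ω₂ : Finset (Fin L)) (v : Matrix (Fin L × Fin M) (Fin R) ℂ)
    (hv : SuppOn Ω₂ v) : SuppOn (Ω₁ ∪ Ω₂) v :=
  fun p r hp => hv p r fun h => hp (Finset.mem_union_right _ h)

lemma suppOn_combo (Ω : Finset (Fin L)) (u v : Matrix (Fin L × Fin M) (Fin R) ℂ)
    (hu : SuppOn Ω u) (hv : SuppOn Ω v) (c d : ℂ) : SuppOn Ω (c • u + d • v) := by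
  intro p r hp
  simp [Matrix.add_apply, Matrix.smul_apply, hu p r hp, hv p r hp]

/-- Cross-correlation bound via RIP and polarization. -/
lemma cross_bound (Ψ : Matrix (Fin Np) (Fin L × Fin M) ℂ) (k : ℕ) (δ : ℝ)
    (h : SRIP (R := R) Ψ k δ) (Ω₁ Ω₂ : Finset (Fin L)) (hdisj : Disjoint Ω₁ Ω₂)
    (hc : (Ω₁ ∪ Ω₂).card ≤ k)
    (u v : Matrix (Fin L × Fin M) (Fin R) ℂ) (hu : SuppOn Ω₁ u) (hv : SuppOn Ω₂ v) :
    (ipc (Ψ * u) (Ψ * v)).re ≤ δ * (Real.sqrt (f2 u) * Real.sqrt (f2 v)) := by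
  by_cases hu0 : f2 u = 0
  · have h0 : u = 0 := (f2_eq_zero_iff u).mp hu0
    simp [h0, ipc, f2, Matrix.mul_zero]
  by_cases hv0 : f2 v = 0
  · have h0 : v = 0 := (f2_eq_zero_iff v).mp hv0
    simp [h0, ipc, f2, Matrix.mul_zero]
  have hun : 0 < f2 u := lt_of_le_of_ne (f2_nonneg u) (Ne.symm hu0)
  have hvn : 0 < f2 v := lt_of_le_of_ne (f2_nonneg v) (Ne.symm hv0)
  set a := Real.sqrt (f2 u) with ha
  set b := Real.sqrt (f2 v) with hb
  have ha0 : 0 < a := Real.sqrt_pos.mpr hun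
  have hb0 : 0 < b := Real.sqrt_pos.mpr hvn
  have ha2 : a^2 = f2 u := Real.sq_sqrt hun.le
  have hb2 : b^2 = f2 v := Real.sq_sqrt hvn.le
  set t := Real.sqrt (b / a) with htdef
  have ht0 : 0 < t := Real.sqrt_pos.mpr (div_pos hb0 ha0)
  have ht2 : t^2 = b / a := Real.sq_sqrt (div_pos hb0 ha0).le
  have hti2 : (t⁻¹)^2 = a / b := by rw [inv_pow, ht2, inv_div]
  have hipuv : ipc u v = 0 := by
    unfold ipc
    apply Finset.sum_eq_zero; intro p _
    apply Finset.sum_eq_zero; intro r _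
    by_cases hp : p.1 ∈ Ω₁
    · rw [hv p r (Finset.disjoint_left.mp hdisj hp), mul_zero]
    · rw [hu p r hp, star_zero, zero_mul]
  have hcombo : ∀ s : ℝ, f2 ((t:ℂ) • u + ((s:ℝ):ℂ) • v) = t^2 * f2 u + s^2 * f2 v := by
    intro s
    rw [f2_add, f2_smul_real, f2_smul_real, ipc_re_smul_real, hipuv]
    simp
  have hPsi : ∀ s : ℝ, f2 (Ψ * ((t:ℂ) • u + ((s:ℝ):ℂ) • v)) =
      t^2 * f2 (Ψ * u) + 2 * (t * s * (ipc (Ψ * u) (Ψ * v)).re) + s^2 * f2 (Ψ * v) := by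
    intro s
    rw [Matrix.mul_add, Matrix.mul_smul, Matrix.mul_smul, f2_add, f2_smul_real, f2_smul_real,
      ipc_re_smul_real]
  have hsupp : ∀ s : ℝ, SuppOn (Ω₁ ∪ Ω₂) ((t:ℂ) • u + ((s:ℝ):ℂ) • v) := fun s =>
    suppOn_combo _ _ _ (suppOn_union_left _ _ _ hu) (suppOn_union_right _ _ _ hv) _ _
  have hup := (h (Ω₁ ∪ Ω₂) hc ((t:ℂ) • u + ((t⁻¹:ℝ):ℂ) • v) (hsupp t⁻¹)).2
  have hlo := (h (Ω₁ ∪ Ω₂) hc ((t:ℂ) • u + ((-t⁻¹:ℝ):ℂ) • v) (hsupp (-t⁻¹))).1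
  rw [frob_sq, frob_sq, hPsi t⁻¹, hcombo t⁻¹] at hup
  rw [frob_sq, frob_sq, hPsi (-t⁻¹), hcombo (-t⁻¹)] at hlo
  have htt : t * t⁻¹ = 1 := mul_inv_cancel₀ ht0.ne'
  have hta : t^2 * f2 u = a * b := by
    rw [ht2, ← ha2]; field_simp
  have htb : (t⁻¹)^2 * f2 v = a * b := by
    rw [hti2, ← hb2]; field_simp
  have hnegsq : (-t⁻¹)^2 = (t⁻¹)^2 := by ring
  have hnegt : t * (-t⁻¹) = -1 := by rw [mul_neg, htt]
  rw [hta, htb] at hup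
  rw [hnegsq, hnegt, hta, htb] at hlo
  rw [htt] at hup
  -- hup : t²f2(Ψu) + 2*(1*E) + t⁻²f2(Ψv) ≤ (1+δ)*(ab+ab)
  -- hlo : (1-δ)*(ab+ab) ≤ t²f2(Ψu) + 2*(-1*E) + t⁻²f2(Ψv)
  nlinarith [hup, hlo]

end Aux2

section RealAux

lemma real_lem0 (c F G : ℝ) (h1 : (1-c)*F ≤ G) (h2 : G ≤ (1+c)*F) (hF : 0 < F) : 0 ≤ c := by
  nlinarith

lemma real_lem1 (g s x y : ℝ) (hg : 0 ≤ g) (hs : 0 ≤ s) (hy : 0 ≤ y)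
    (h1 : g * x ≤ s) (h2 : s^2 ≤ x * y) : g * s ≤ y := by
  rcases eq_or_lt_of_le hs with h0 | h0
  · rw [← h0, mul_zero]; exact hy
  · nlinarith [mul_nonneg (sub_nonneg.mpr h1) hy, mul_nonneg hg (sub_nonneg.mpr h2)]

lemma real_lem2 (y z : ℝ) (hy : 0 ≤ y) (hz : 0 ≤ z) (h : y^2 ≤ z * y) : y ≤ z := by
  rcases eq_or_lt_of_le hy with h0 | h0
  · rw [← h0]; exact hz
  · nlinarith

lemma real_chain (g1 g2 p y d c β : ℝ) (hg2 : 0 ≤ g2) (hc : 0 ≤ c)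
    (h1 : g1 * p ≤ y) (h2 : y ≤ c * d) (h3 : g2 * d ≤ β) :
    g1 * g2 * p ≤ c * β := by
  nlinarith [mul_nonneg hg2 (sub_nonneg.mpr h1), mul_nonneg hg2 (sub_nonneg.mpr h2),
    mul_nonneg hc (sub_nonneg.mpr h3)]

lemma real_lem4 (β p ρ : ℝ) (hβ : 0 ≤ β) (hp : 0 ≤ p) (hρ : 0 ≤ ρ)
    (h : β^2 = p^2 + ρ^2) : β ≤ p + ρ := by
  nlinarith [mul_nonneg hp hρ]

lemma real_lem5 (c g β p ρ : ℝ) (hg : 0 < g) (h1 : β ≤ p + ρ) (h2 : g * p ≤ c * β)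
    (hβ : 0 ≤ β) : (1 - c / g) * β ≤ ρ := by
  have hp : p ≤ c / g * β := by
    rw [div_mul_eq_mul_div, le_div_iff₀ hg]
    nlinarith
  nlinarith [hp, h1]

end RealAux

/-- near-orthogonality of the residual projection,
`(1 − δ_{|Ω₁|+|Ω₂|}/√((1−δ_{|Ω₁|})(1−δ_{|Ω₂|}))) ‖Ψ_{Ω₂}D_{Ω₂}‖_F ≤
 ‖(I − Ψ_{Ω₁}Ψ_{Ω₁}^†)Ψ_{Ω₂}D_{Ω₂}‖_F ≤ ‖Ψ_{Ω₂}D_{Ω₂}‖_F`. -/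
theorem srip_projection_bounds
    (Ψ : Matrix (Fin Np) (Fin L × Fin M) ℂ) (P : ℕ) (δ : ℕ → ℝ)
    (hRIP : ∀ k, SRIP (R := R) Ψ k (δ k))
    (Ω₁ Ω₂ : Finset (Fin L)) (hdisj : Disjoint Ω₁ Ω₂)
    (hcard : Ω₁.card + Ω₂.card ≤ P)
    (hδ1 : δ Ω₁.card < 1) (hδ2 : δ Ω₂.card < 1)
    (hδ12 : δ (Ω₁.card + Ω₂.card) < 1)
    (hfull : IsUnit ((bsub Ψ Ω₁)ᴴ * bsub Ψ Ω₁))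
    (D : Matrix (Fin L × Fin M) (Fin R) ℂ) (hD : SuppOn Ω₂ D) :
    (1 - δ (Ω₁.card + Ω₂.card) /
        Real.sqrt ((1 - δ Ω₁.card) * (1 - δ Ω₂.card))) *
        frob (bsub Ψ Ω₂ * rsub D Ω₂) ≤
      frob ((1 - bsub Ψ Ω₁ * bpinv Ψ Ω₁) * (bsub Ψ Ω₂ * rsub D Ω₂)) ∧
    frob ((1 - bsub Ψ Ω₁ * bpinv Ψ Ω₁) * (bsub Ψ Ω₂ * rsub D Ω₂)) ≤
      frob (bsub Ψ Ω₂ * rsub D Ω₂) := by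
  classical
  by_cases hD0 : f2 D = 0
  · have hDz : D = 0 := (f2_eq_zero_iff D).mp hD0
    subst hDz
    have hz : rsub (0 : Matrix (Fin L × Fin M) (Fin R) ℂ) Ω₂ = 0 := by
      ext q r; simp [rsub]
    rw [hz, Matrix.mul_zero, Matrix.mul_zero]
    have hfz : frob (0 : Matrix (Fin Np) (Fin R) ℂ) = 0 := by simp [frob]
    rw [hfz, mul_zero]
    exact ⟨le_refl 0, le_refl 0⟩
  have hDpos : 0 < f2 D := lt_of_le_of_ne (f2_nonneg D) (Ne.symm hD0)
  set d12 := δ (Ω₁.card + Ω₂.card) with hd12def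
  have h1pos : (0:ℝ) < 1 - δ Ω₁.card := by linarith
  have h2pos : (0:ℝ) < 1 - δ Ω₂.card := by linarith
  set g1 := Real.sqrt (1 - δ Ω₁.card) with hg1def
  set g2 := Real.sqrt (1 - δ Ω₂.card) with hg2def
  have hg1p : 0 < g1 := Real.sqrt_pos.mpr h1pos
  have hg2p : 0 < g2 := Real.sqrt_pos.mpr h2pos
  -- d12 ≥ 0
  have hcu : (Ω₁ ∪ Ω₂).card ≤ Ω₁.card + Ω₂.card := Finset.card_union_le _ _
  obtain ⟨h12a, h12b⟩ := hRIP (Ω₁.card + Ω₂.card) (Ω₁ ∪ Ω₂) hcu D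
    (suppOn_union_right Ω₁ Ω₂ D hD)
  rw [frob_sq, frob_sq] at h12a h12b
  have hd12nn : 0 ≤ d12 := real_lem0 _ _ _ h12a h12b hDpos
  -- matrices
  set Q := bsub Ψ Ω₁ with hQdef
  set B := bsub Ψ Ω₂ * rsub D Ω₂ with hBdef
  have hB : B = Ψ * D := mul_rsub_eq Ψ Ω₂ D hD
  set G := Qᴴ * Q with hGdef
  set Y := Qᴴ * B with hYdef
  set X := G⁻¹ * Y with hXdef
  have hGdet : IsUnit G.det := (Matrix.isUnit_iff_isUnit_det G).mp hfull
  have hGG : G * G⁻¹ = 1 := Matrix.mul_nonsing_inv G hGdet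
  have hPB : (1 - Q * bpinv Ψ Ω₁) * B = B - Q * X := by
    have hbp : bpinv Ψ Ω₁ = G⁻¹ * Qᴴ := rfl
    rw [hbp, Matrix.sub_mul, Matrix.one_mul, Matrix.mul_assoc, Matrix.mul_assoc,
      ← hYdef, ← hXdef]
  clear_value Q B G Y X
  have horth : ipc (Q * X) (B - Q * X) = 0 := by
    rw [ipc_mul_left]
    have hz : Qᴴ * (B - Q * X) = 0 := by
      rw [Matrix.mul_sub, ← hYdef, ← Matrix.mul_assoc, ← hGdef, hXdef, ← Matrix.mul_assoc,
        hGG, Matrix.one_mul, sub_self]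
    rw [hz, ipc_zero_right]
  have hsum : Q * X + (B - Q * X) = B := by abel
  have hpyth : f2 B = f2 (Q * X) + f2 (B - Q * X) := by
    conv_lhs => rw [← hsum]
    rw [f2_add, horth]
    simp
  have hQXY : f2 (Q * X) = (ipc X Y).re := by
    have h1 : ipc (Q * X) B = ipc (Q * X) (Q * X) := by
      conv_lhs => rw [← hsum]
      rw [ipc_add_right, horth, add_zero]
    have h2 : ipc (Q * X) B = ipc X Y := by rw [ipc_mul_left, ← hYdef]
    rw [← ipc_self_re, ← h1, h2]
  have hcs : f2 (Q * X) ≤ Real.sqrt (f2 X) * Real.sqrt (f2 Y) := by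
    rw [hQXY]; exact ipc_cs X Y
  have hlo1 := (hRIP Ω₁.card Ω₁ le_rfl (expand Ω₁ X) (suppOn_expand Ω₁ X)).1
  rw [frob_sq, frob_sq, mul_expand, ← hQdef, f2_expand] at hlo1
  have hgs : g1 * Real.sqrt (f2 X) ≤ Real.sqrt (f2 (Q * X)) := by
    rw [hg1def, ← Real.sqrt_mul h1pos.le]
    exact Real.sqrt_le_sqrt hlo1
  have hπy : g1 * Real.sqrt (f2 (Q * X)) ≤ Real.sqrt (f2 Y) := by
    have hcs' : Real.sqrt (f2 (Q * X)) ^ 2 ≤ Real.sqrt (f2 X) * Real.sqrt (f2 Y) := by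
      rw [Real.sq_sqrt (f2_nonneg _)]; exact hcs
    exact real_lem1 _ _ _ _ hg1p.le (Real.sqrt_nonneg _) (Real.sqrt_nonneg _) hgs hcs'
  have hYQ : f2 Y = (ipc (Q * Y) B).re := by
    have e1 : ipc Y Y = ipc B (Q * Y) := by
      conv_lhs => rw [hYdef]
      rw [ipc_mul_left, conjTranspose_conjTranspose, ← hYdef]
    rw [← ipc_self_re, e1, ipc_re_comm]
  have hcross := cross_bound Ψ (Ω₁.card + Ω₂.card) d12 (hRIP _) Ω₁ Ω₂ hdisj hcu
    (expand Ω₁ Y) D (suppOn_expand Ω₁ Y) hD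
  rw [mul_expand, ← hQdef, f2_expand, ← hB] at hcross
  have hyd : Real.sqrt (f2 Y) ≤ d12 * Real.sqrt (f2 D) := by
    have hkey : Real.sqrt (f2 Y) ^ 2 ≤ (d12 * Real.sqrt (f2 D)) * Real.sqrt (f2 Y) := by
      calc Real.sqrt (f2 Y) ^ 2 = f2 Y := Real.sq_sqrt (f2_nonneg _)
        _ = (ipc (Q * Y) B).re := hYQ
        _ ≤ d12 * (Real.sqrt (f2 Y) * Real.sqrt (f2 D)) := hcross
        _ = (d12 * Real.sqrt (f2 D)) * Real.sqrt (f2 Y) := by ring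
    exact real_lem2 _ _ (Real.sqrt_nonneg _) (mul_nonneg hd12nn (Real.sqrt_nonneg _)) hkey
  have hlo2 := (hRIP Ω₂.card Ω₂ le_rfl D hD).1
  rw [frob_sq, frob_sq, ← hB] at hlo2
  have hdb : g2 * Real.sqrt (f2 D) ≤ Real.sqrt (f2 B) := by
    rw [hg2def, ← Real.sqrt_mul h2pos.le]
    exact Real.sqrt_le_sqrt hlo2
  have hkey2 : g1 * g2 * Real.sqrt (f2 (Q * X)) ≤ d12 * Real.sqrt (f2 B) :=
    real_chain _ _ _ _ _ _ _ hg2p.le hd12nn hπy hyd hdb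
  have hβπρ : Real.sqrt (f2 B) ≤ Real.sqrt (f2 (Q * X)) + Real.sqrt (f2 (B - Q * X)) := by
    refine real_lem4 _ _ _ (Real.sqrt_nonneg _) (Real.sqrt_nonneg _) (Real.sqrt_nonneg _) ?_
    rw [Real.sq_sqrt (f2_nonneg _), Real.sq_sqrt (f2_nonneg _), Real.sq_sqrt (f2_nonneg _),
      hpyth]
  constructor
  · rw [hPB, frob_eq_sqrt_f2, frob_eq_sqrt_f2]
    have hprod : Real.sqrt ((1 - δ Ω₁.card) * (1 - δ Ω₂.card)) = g1 * g2 := by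
      rw [hg1def, hg2def, ← Real.sqrt_mul h1pos.le]
    rw [hprod]
    exact real_lem5 _ _ _ _ _ (mul_pos hg1p hg2p) hβπρ hkey2 (Real.sqrt_nonneg _)
  · rw [hPB, frob_eq_sqrt_f2, frob_eq_sqrt_f2]
    apply Real.sqrt_le_sqrt
    have := f2_nonneg (Q * X)
    linarith [hpyth]
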